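/- Consider on ℝ³ (coordinates x¹, x², x³) the metric ḡ with diagonal components ḡ_{11} = e^{x²}, ḡ_{22} = e^{x¹}, ḡ_{33} = 1 and vanishing off-diagonal components. Then: (a) up to the standard symmetries of the curvature tensor, the only nonvanishing component of its (0,4) Riemann–Christoffel curvature tensor is R̄_{1212} = −¼(e^{x¹} + e^{x²}); (b) the only nonvanishing components of the covariant derivative of the curvature tensor are those determined (via curvature symmetries) by R̄_{1212,1} = e^{x²}/4 and R̄_{1212,2} = e^{x¹}/4, so in particular the metric is not locally symmetric; (c) with the 1-form Π̄ = (−e^{x²}/(e^{x¹} + e^{x²}), −e^{x¹}/(e^{x¹} + e^{x²}), 0), the metric is recurrent: R̄_{ijkl,m} = Π̄_m R̄_{ijkl} for all indices i,j,k,l,m ∈ {1,2,3}. -/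

import Mathlib

noncomputable section

/-- Partial derivative of a scalar function along the `j`-th coordinate direction. -/
def pd {k : ℕ} (F : (Fin k → ℝ) → ℝ) (j : Fin k) (x : Fin k → ℝ) : ℝ :=
  fderiv ℝ F x (Pi.single j 1)

/-- Christoffel symbols `Γ^i_{jl}` of a metric `h` with (pointwise) inverse `hinv`. -/
def Christoffel {k : ℕ} (h hinv : (Fin k → ℝ) → Fin k → Fin k → ℝ)
    (i j l : Fin k) (x : Fin k → ℝ) : ℝ :=
  (1 / 2) * ∑ r, hinv x i r *
    (pd (fun y => h y r l) j x + pd (fun y => h y j r) l x - pd (fun y => h y j l) r x)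

/-- The (0,4) Riemann-Christoffel curvature tensor of `h`. -/
def Riem {k : ℕ} (h hinv : (Fin k → ℝ) → Fin k → Fin k → ℝ)
    (x : Fin k → ℝ) (i j s l : Fin k) : ℝ :=
  ∑ r, h x i r *
    (pd (Christoffel h hinv r l j) s x - pd (Christoffel h hinv r s j) l x
      + (∑ t, Christoffel h hinv r s t x * Christoffel h hinv t l j x)
      - ∑ t, Christoffel h hinv r l t x * Christoffel h hinv t s j x)

/-- The Ricci tensor of `h`. -/
def Ric {k : ℕ} (h hinv : (Fin k → ℝ) → Fin k → Fin k → ℝ)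
    (x : Fin k → ℝ) (j l : Fin k) : ℝ :=
  ∑ i, ∑ s, hinv x i s * Riem h hinv x i j s l

/-- The scalar curvature of `h`. -/
def Scal {k : ℕ} (h hinv : (Fin k → ℝ) → Fin k → Fin k → ℝ) (x : Fin k → ℝ) : ℝ :=
  ∑ j, ∑ l, hinv x j l * Ric h hinv x j l

/-- Covariant derivative (w.r.t. the Levi-Civita connection of `h`) of a (0,4) tensor field. -/
def cov4 {k : ℕ} (h hinv : (Fin k → ℝ) → Fin k → Fin k → ℝ)
    (T : (Fin k → ℝ) → Fin k → Fin k → Fin k → Fin k → ℝ)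
    (x : Fin k → ℝ) (i j s l m : Fin k) : ℝ :=
  pd (fun y => T y i j s l) m x
    - (∑ r, Christoffel h hinv r m i x * T x r j s l)
    - (∑ r, Christoffel h hinv r m j x * T x i r s l)
    - (∑ r, Christoffel h hinv r m s x * T x i j r l)
    - ∑ r, Christoffel h hinv r m l x * T x i j s r

/-- Covariant derivative of a (0,2) tensor field. -/
def cov2 {k : ℕ} (h hinv : (Fin k → ℝ) → Fin k → Fin k → ℝ)
    (T : (Fin k → ℝ) → Fin k → Fin k → ℝ) (x : Fin k → ℝ) (i j m : Fin k) : ℝ :=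
  pd (fun y => T y i j) m x
    - (∑ r, Christoffel h hinv r m i x * T x r j)
    - ∑ r, Christoffel h hinv r m j x * T x i r

/-- Kulkarni-Nomizu product of two (0,2) tensors. -/
def KN {k : ℕ} (A E : (Fin k → ℝ) → Fin k → Fin k → ℝ)
    (x : Fin k → ℝ) (i j s l : Fin k) : ℝ :=
  A x i l * E x j s + A x j s * E x i l - A x i s * E x j l - A x j l * E x i s

/-- The Gaussian curvature tensor `G_{ijsl} = h_{il}h_{js} - h_{is}h_{jl}`. -/
def Gt {k : ℕ} (h : (Fin k → ℝ) → Fin k → Fin k → ℝ)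
    (x : Fin k → ℝ) (i j s l : Fin k) : ℝ :=
  h x i l * h x j s - h x i s * h x j l

/-- The conformal (Weyl) curvature tensor of a `k`-dimensional metric `h`. -/
def Weyl {k : ℕ} (h hinv : (Fin k → ℝ) → Fin k → Fin k → ℝ)
    (x : Fin k → ℝ) (i j s l : Fin k) : ℝ :=
  Riem h hinv x i j s l - (1 / ((k : ℝ) - 2)) * KN h (Ric h hinv) x i j s l
    + (Scal h hinv x / (2 * ((k : ℝ) - 1) * ((k : ℝ) - 2))) * KN h h x i j s l

/-- Recurrency condition at a point. -/
def Recur {k : ℕ} (h hinv : (Fin k → ℝ) → Fin k → Fin k → ℝ)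
    (piF : (Fin k → ℝ) → Fin k → ℝ) (x : Fin k → ℝ) : Prop :=
  ∀ i j s l m, cov4 h hinv (Riem h hinv) x i j s l m = piF x m * Riem h hinv x i j s l

/-- Hyper generalized recurrency condition at a point. -/
def HGK {k : ℕ} (h hinv : (Fin k → ℝ) → Fin k → Fin k → ℝ)
    (piF psiF : (Fin k → ℝ) → Fin k → ℝ) (x : Fin k → ℝ) : Prop :=
  ∀ i j s l m, cov4 h hinv (Riem h hinv) x i j s l m =
    piF x m * Riem h hinv x i j s l + psiF x m * KN h (Ric h hinv) x i j s l

/-- Weakly generalized recurrency condition at a point. -/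
def WGK {k : ℕ} (h hinv : (Fin k → ℝ) → Fin k → Fin k → ℝ)
    (piF phiF : (Fin k → ℝ) → Fin k → ℝ) (x : Fin k → ℝ) : Prop :=
  ∀ i j s l m, cov4 h hinv (Riem h hinv) x i j s l m =
    piF x m * Riem h hinv x i j s l
      + phiF x m * KN (Ric h hinv) (Ric h hinv) x i j s l

/-- Super generalized recurrency condition at a point. -/
def SGK {k : ℕ} (h hinv : (Fin k → ℝ) → Fin k → Fin k → ℝ)
    (piF phiF psiF thetaF : (Fin k → ℝ) → Fin k → ℝ) (x : Fin k → ℝ) : Prop :=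
  ∀ i j s l m, cov4 h hinv (Riem h hinv) x i j s l m =
    piF x m * Riem h hinv x i j s l
      + phiF x m * KN (Ric h hinv) (Ric h hinv) x i j s l
      + psiF x m * KN h (Ric h hinv) x i j s l
      + thetaF x m * KN h h x i j s l

/-- The metric of Example 1 (base): diag(e^{x²}, e^{x¹}, 1) on ℝ³. -/
def g3 : (Fin 3 → ℝ) → Fin 3 → Fin 3 → ℝ := fun x i j =>
  if i = 0 ∧ j = 0 then Real.exp (x 1)
  else if i = 1 ∧ j = 1 then Real.exp (x 0)
  else if i = 2 ∧ j = 2 then 1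
  else 0

/-- The inverse of the metric `g3`. -/
def g3inv : (Fin 3 → ℝ) → Fin 3 → Fin 3 → ℝ := fun x i j =>
  if i = 0 ∧ j = 0 then Real.exp (-x 1)
  else if i = 1 ∧ j = 1 then Real.exp (-x 0)
  else if i = 2 ∧ j = 2 then 1
  else 0

/-- The associated 1-form of recurrency of Example 1. -/
def pi3 : (Fin 3 → ℝ) → Fin 3 → ℝ := fun x m =>
  if m = 0 then -Real.exp (x 1) / (Real.exp (x 0) + Real.exp (x 1))
  else if m = 1 then -Real.exp (x 0) / (Real.exp (x 0) + Real.exp (x 1))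
  else 0

abbrev prj {k : ℕ} (a : Fin k) : (Fin k → ℝ) →L[ℝ] ℝ :=
  ContinuousLinearMap.proj (R := ℝ) (φ := fun _ : Fin k => ℝ) a
lemma hasF_coord {k : ℕ} (a : Fin k) (x : Fin k → ℝ) :
    HasFDerivAt (fun y : Fin k → ℝ => y a) (prj a) x :=
  (prj a).hasFDerivAt
@[simp] lemma pd_const {k : ℕ} (c : ℝ) (j : Fin k) (x : Fin k → ℝ) :
    pd (fun _ => c) j x = 0 := by
  simp [pd]
@[simp] lemma pd_expA {k : ℕ} (a j : Fin k) (x : Fin k → ℝ) :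
    pd (fun y => Real.exp (y a)) j x = Real.exp (x a) * (Pi.single j 1 : Fin k → ℝ) a := by
  have h := (hasF_coord a x).exp
  simp [pd, h.fderiv, mul_comm]
@[simp] lemma pd_cexpSub {k : ℕ} (c : ℝ) (a b j : Fin k) (x : Fin k → ℝ) :
    pd (fun y => c * Real.exp (y a - y b)) j x
      = c * (Real.exp (x a - x b) * ((Pi.single j 1 : Fin k → ℝ) a - (Pi.single j 1 : Fin k → ℝ) b)) := by
  have h : HasFDerivAt (fun y : Fin k → ℝ => c * Real.exp (y a - y b)) _ x :=
    (((hasF_coord a x).sub (hasF_coord b x)).exp).const_mul c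
  simp [pd, h.fderiv, mul_sub, mul_comm, mul_assoc, mul_left_comm]
@[simp] lemma pd_negcexpSub {k : ℕ} (c : ℝ) (a b j : Fin k) (x : Fin k → ℝ) :
    pd (fun y => -(c * Real.exp (y a - y b))) j x
      = -(c * (Real.exp (x a - x b) * ((Pi.single j 1 : Fin k → ℝ) a - (Pi.single j 1 : Fin k → ℝ) b))) := by
  have h : HasFDerivAt (fun y : Fin k → ℝ => -(c * Real.exp (y a - y b))) _ x :=
    ((((hasF_coord a x).sub (hasF_coord b x)).exp).const_mul c).neg
  rw [pd, h.fderiv]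
  simp [mul_sub, mul_comm, mul_assoc, mul_left_comm]

@[simp] lemma pd_cpair {k : ℕ} (c : ℝ) (a b j : Fin k) (x : Fin k → ℝ) :
    pd (fun y => c * (Real.exp (y a) + Real.exp (y b))) j x
      = c * (Real.exp (x a) * (Pi.single j 1 : Fin k → ℝ) a + Real.exp (x b) * (Pi.single j 1 : Fin k → ℝ) b) := by
  have h : HasFDerivAt (fun y : Fin k → ℝ => c * (Real.exp (y a) + Real.exp (y b))) _ x :=
    (((hasF_coord a x).exp).add ((hasF_coord b x).exp)).const_mul c
  rw [pd, h.fderiv]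
  simp [mul_add, mul_comm, mul_assoc, mul_left_comm]

def Γe (x : Fin 3 → ℝ) (i j l : Fin 3) : ℝ :=
  if i = 0 ∧ ((j = 0 ∧ l = 1) ∨ (j = 1 ∧ l = 0)) then 1/2
  else if i = 0 ∧ j = 1 ∧ l = 1 then -(1/2) * Real.exp (x 0 - x 1)
  else if i = 1 ∧ j = 0 ∧ l = 0 then -(1/2) * Real.exp (x 1 - x 0)
  else if i = 1 ∧ ((j = 0 ∧ l = 1) ∨ (j = 1 ∧ l = 0)) then 1/2
  else 0

lemma chrVal (i j l : Fin 3) (x : Fin 3 → ℝ) :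
    Christoffel g3 g3inv i j l x = Γe x i j l := by
  fin_cases i <;> fin_cases j <;> fin_cases l <;>
    simp [Christoffel, Fin.sum_univ_three, g3, g3inv, Γe, Pi.single_apply,
      Real.exp_sub, Real.exp_neg] <;>
    field_simp

lemma chr (i j l : Fin 3) : Christoffel g3 g3inv i j l = fun x => Γe x i j l :=
  funext fun x => chrVal i j l x

def ΓD (x : Fin 3 → ℝ) (i j l s : Fin 3) : ℝ :=
  if i = 0 ∧ j = 1 ∧ l = 1 then
    -(1/2) * (Real.exp (x 0 - x 1) * ((Pi.single s 1 : Fin 3 → ℝ) 0 - (Pi.single s 1 : Fin 3 → ℝ) 1))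
  else if i = 1 ∧ j = 0 ∧ l = 0 then
    -(1/2) * (Real.exp (x 1 - x 0) * ((Pi.single s 1 : Fin 3 → ℝ) 1 - (Pi.single s 1 : Fin 3 → ℝ) 0))
  else 0

lemma pdChr (i j l s : Fin 3) (x : Fin 3 → ℝ) :
    pd (Christoffel g3 g3inv i j l) s x = ΓD x i j l s := by
  rw [chr]
  fin_cases i <;> fin_cases j <;> fin_cases l <;> simp [Γe, ΓD]

def Rcoef (i j s l : Fin 3) : ℝ :=
  if (i = 0 ∧ j = 1 ∧ s = 0 ∧ l = 1) ∨ (i = 1 ∧ j = 0 ∧ s = 1 ∧ l = 0) then -(1/4)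
  else if (i = 0 ∧ j = 1 ∧ s = 1 ∧ l = 0) ∨ (i = 1 ∧ j = 0 ∧ s = 0 ∧ l = 1) then 1/4
  else 0


set_option maxHeartbeats 1000000 in
lemma RiemVal (x : Fin 3 → ℝ) (i j s l : Fin 3) :
    Riem g3 g3inv x i j s l = Rcoef i j s l * (Real.exp (x 0) + Real.exp (x 1)) := by
  fin_cases i <;> fin_cases j <;> fin_cases s <;> fin_cases l <;>
    simp only [Riem, Fin.sum_univ_three, pdChr, chrVal] <;>
    simp [Γe, ΓD, Rcoef, g3, Pi.single_apply, Real.exp_sub] <;>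
    field_simp <;> ring

lemma RiemEq (i j s l : Fin 3) :
    (fun y => Riem g3 g3inv y i j s l)
      = fun y => Rcoef i j s l * (Real.exp (y 0) + Real.exp (y 1)) :=
  funext fun y => RiemVal y i j s l

lemma pdRiem (i j s l m : Fin 3) (x : Fin 3 → ℝ) :
    pd (fun y => Riem g3 g3inv y i j s l) m x
      = Rcoef i j s l * (Real.exp (x 0) * (Pi.single m 1 : Fin 3 → ℝ) 0
          + Real.exp (x 1) * (Pi.single m 1 : Fin 3 → ℝ) 1) := by
  rw [RiemEq, pd_cpair]


set_option maxHeartbeats 1000000 in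
lemma key (x : Fin 3 → ℝ) (i j s l m : Fin 3) :
    cov4 g3 g3inv (Riem g3 g3inv) x i j s l m
      = pi3 x m * (Rcoef i j s l * (Real.exp (x 0) + Real.exp (x 1))) := by
  have hne : Real.exp (x 0) + Real.exp (x 1) ≠ 0 := by positivity
  fin_cases i <;> fin_cases j <;> fin_cases s <;> fin_cases l <;> fin_cases m <;>
    simp only [cov4, Fin.sum_univ_three, pdRiem] <;>
    simp only [chrVal, RiemVal] <;>
    simp [Γe, Rcoef, pi3, Pi.single_apply, Real.exp_sub] <;>
    field_simp <;> ring

lemma Rcoef_zero (i j k l : Fin 3)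
    (h : ¬ (((i = 0 ∧ j = 1) ∨ (i = 1 ∧ j = 0)) ∧ ((k = 0 ∧ l = 1) ∨ (k = 1 ∧ l = 0)))) :
    Rcoef i j k l = 0 := by
  fin_cases i <;> fin_cases j <;> fin_cases k <;> fin_cases l <;> simp_all [Rcoef]

set_option maxHeartbeats 2000000 in
/-- Example 1 (base manifold): the metric `e^{x²}(dx¹)² + e^{x¹}(dx²)² + (dx³)²` on ℝ³ has
`R_{1212} = -(e^{x¹}+e^{x²})/4` as its only nonvanishing curvature component up to symmetry,
its only nonvanishing components of `∇R` are determined by `R_{1212,1} = e^{x²}/4` and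
`R_{1212,2} = e^{x¹}/4` (so it is not locally symmetric), and it is recurrent with associated
1-form `pi3`. -/
theorem example_base_recurrent :
    (∀ x : Fin 3 → ℝ,
      Riem g3 g3inv x 0 1 0 1 = -(1 / 4) * (Real.exp (x 0) + Real.exp (x 1)))
    ∧ (∀ x : Fin 3 → ℝ, ∀ i j k l : Fin 3,
        ¬ (((i = 0 ∧ j = 1) ∨ (i = 1 ∧ j = 0)) ∧ ((k = 0 ∧ l = 1) ∨ (k = 1 ∧ l = 0))) →
        Riem g3 g3inv x i j k l = 0)
    ∧ (∀ x : Fin 3 → ℝ,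
        cov4 g3 g3inv (Riem g3 g3inv) x 0 1 0 1 0 = Real.exp (x 1) / 4)
    ∧ (∀ x : Fin 3 → ℝ,
        cov4 g3 g3inv (Riem g3 g3inv) x 0 1 0 1 1 = Real.exp (x 0) / 4)
    ∧ (∀ x : Fin 3 → ℝ, ∀ i j k l m : Fin 3,
        ¬ ((((i = 0 ∧ j = 1) ∨ (i = 1 ∧ j = 0)) ∧ ((k = 0 ∧ l = 1) ∨ (k = 1 ∧ l = 0)))
            ∧ (m = 0 ∨ m = 1)) →
        cov4 g3 g3inv (Riem g3 g3inv) x i j k l m = 0)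
    ∧ ¬ (∀ x : Fin 3 → ℝ, ∀ i j k l m : Fin 3, cov4 g3 g3inv (Riem g3 g3inv) x i j k l m = 0)
    ∧ (∀ x : Fin 3 → ℝ, ∀ i j k l m : Fin 3,
        cov4 g3 g3inv (Riem g3 g3inv) x i j k l m = pi3 x m * Riem g3 g3inv x i j k l) := by
  refine ⟨?_, ?_, ?_, ?_, ?_, ?_, ?_⟩
  · intro x
    rw [RiemVal]
    norm_num [Rcoef]
  · intro x i j k l h
    rw [RiemVal, Rcoef_zero i j k l h, zero_mul]
  · intro x
    have hne : Real.exp (x 0) + Real.exp (x 1) ≠ 0 := by positivity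
    rw [key]
    simp [pi3, Rcoef]
    field_simp
  · intro x
    have hne : Real.exp (x 0) + Real.exp (x 1) ≠ 0 := by positivity
    rw [key]
    simp [pi3, Rcoef]
    field_simp
  · intro x i j k l m h
    rw [key]
    by_cases hp : ((i = 0 ∧ j = 1) ∨ (i = 1 ∧ j = 0)) ∧ ((k = 0 ∧ l = 1) ∨ (k = 1 ∧ l = 0))
    · fin_cases m
      · exact absurd ⟨hp, Or.inl rfl⟩ h
      · exact absurd ⟨hp, Or.inr rfl⟩ h
      · simp [pi3]
    · rw [Rcoef_zero i j k l hp]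
      ring
  · intro H
    have h := H (fun _ => 0) 0 1 0 1 0
    rw [key] at h
    norm_num [pi3, Rcoef, Real.exp_zero] at h
  · intro x i j k l m
    rw [key, RiemVal]
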